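/- Fix a sequence ε̄ = ⟨ε_n : n < ω⟩ of positive reals with ∑_n ε_n < ∞, and let Cn = ⟨Ω_ε̄, 2^ω, ⋫⟩ be the relational system where c̄ ⋫ y iff y ∉ N(c̄). Then Cn ≅_T C_{N(2^ω)}^⊥, where N(2^ω) is the ideal of subsets of 2^ω contained in a Borel set of Lb₂-measure zero and C_{N(2^ω)} = ⟨2^ω, N(2^ω), ∈⟩. In particular, 𝔟(Cn) = cov(N(2^ω)) and 𝔡(Cn) = non(N(2^ω)). -/

import Mathlib

open Cardinal

universe u v

/-- A set `F ⊆ X` is unbounded in the relational system `⟨X, Y, r⟩`: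
no `y ∈ Y` satisfies `r x y` for all `x ∈ F`. -/
def RUnbounded {X : Type u} {Y : Type v} (r : X → Y → Prop) (F : Set X) : Prop :=
  ¬ ∃ y : Y, ∀ x ∈ F, r x y

/-- A set `E ⊆ Y` is dominating in the relational system `⟨X, Y, r⟩`. -/
def RDominating {X : Type u} {Y : Type v} (r : X → Y → Prop) (E : Set Y) : Prop :=
  ∀ x : X, ∃ y ∈ E, r x y

/-- The unbounding number `𝔟(R)` of the relational system `⟨X, Y, r⟩`. -/
noncomputable def bNum {X : Type u} {Y : Type v} (r : X → Y → Prop) : Cardinal.{u} :=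
  sInf { c | ∃ F : Set X, RUnbounded r F ∧ c = #F }

/-- The dominating number `𝔡(R)` of the relational system `⟨X, Y, r⟩`. -/
noncomputable def dNum {X : Type u} {Y : Type v} (r : X → Y → Prop) : Cardinal.{v} :=
  sInf { c | ∃ E : Set Y, RDominating r E ∧ c = #E }

/-- Tukey connection: `R ≼_T R'`. -/
def TukeyLE {X Y X' Y' : Type*} (r : X → Y → Prop) (r' : X' → Y' → Prop) : Prop :=
  ∃ (f : X → X') (g : Y' → Y), ∀ x y', r' (f x) y' → r x (g y')

/-- `I` is an ideal of subsets of `X`. -/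
def IsIdeal {X : Type u} (I : Set (Set X)) : Prop :=
  ∅ ∈ I ∧ (∀ A ∈ I, ∀ B ⊆ A, B ∈ I) ∧ (∀ A ∈ I, ∀ B ∈ I, A ∪ B ∈ I)

/-- `add(I)`, the additivity of `I`. -/
noncomputable def addIdeal {X : Type u} (I : Set (Set X)) : Cardinal.{u} :=
  sInf { c | ∃ F ⊆ I, ⋃₀ F ∉ I ∧ c = #F }

/-- `cof(I)`, the cofinality of `I`. -/
noncomputable def cofIdeal {X : Type u} (I : Set (Set X)) : Cardinal.{u} :=
  sInf { c | ∃ D ⊆ I, (∀ A ∈ I, ∃ B ∈ D, A ⊆ B) ∧ c = #D }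

/-- `non(I)`, the uniformity of `I`. -/
noncomputable def nonIdeal {X : Type u} (I : Set (Set X)) : Cardinal.{u} :=
  sInf { c | ∃ F : Set X, F ∉ I ∧ c = #F }

/-- `cov(I)`, the covering number of `I`. -/
noncomputable def covIdeal {X : Type u} (I : Set (Set X)) : Cardinal.{u} :=
  sInf { c | ∃ C ⊆ I, ⋃₀ C = Set.univ ∧ c = #C }

/-- The basic clopen set `[s] ⊆ 2^ω` of all sequences extending the finite
binary string `s`. -/
def cyl (s : List Bool) : Set (ℕ → Bool) :=
  { x | ∀ i : Fin s.length, x i = s.get i }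

/-- `[c] = ⋃_{s ∈ c} [s]` for a finite set `c` of finite binary strings. -/
def cylF (c : Finset (List Bool)) : Set (ℕ → Bool) :=
  ⋃ s ∈ c, cyl s

/-- `N(c̄) = ⋂_m ⋃_{n ≥ m} [c_n]`. -/
def NSet (cbar : ℕ → Finset (List Bool)) : Set (ℕ → Bool) :=
  { x | ∀ m : ℕ, ∃ n ≥ m, x ∈ cylF (cbar n) }

/-- The null ideal `N(μ)`: sets contained in a Borel set of `μ`-measure zero. -/
def nullIdealOf (μ : MeasureTheory.Measure (ℕ → Bool)) : Set (Set (ℕ → Bool)) :=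
  { A | ∃ B : Set (ℕ → Bool), MeasurableSet B ∧ A ⊆ B ∧ μ B = 0 }

/-- The set `Ω_ε̄` of codes of null sets. -/
def OmT (μ : MeasureTheory.Measure (ℕ → Bool)) (ε : ℕ → ℝ) : Type :=
  { cbar : ℕ → Finset (List Bool) // ∀ n, μ (cylF (cbar n)) < ENNReal.ofReal (ε n) }

/-- The relational system `Cn = ⟨Ω_ε̄, 2^ω, ⋫⟩`, where `c̄ ⋫ y` iff `y ∉ N(c̄)`. -/
def CnRel (μ : MeasureTheory.Measure (ℕ → Bool)) (ε : ℕ → ℝ) :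
    OmT μ ε → (ℕ → Bool) → Prop :=
  fun cbar y => y ∉ NSet cbar.1

/-- The dual `C_{N(2^ω)}^⊥ = ⟨N(2^ω), 2^ω, ∌⟩` of `C_{N(2^ω)} = ⟨2^ω, N(2^ω), ∈⟩`. -/
def CNperp (μ : MeasureTheory.Measure (ℕ → Bool)) :
    nullIdealOf μ → (ℕ → Bool) → Prop :=
  fun A y => y ∉ (A : Set (ℕ → Bool))

open MeasureTheory Filter Set Topology

noncomputable section
open Classical

def cylSeg (x : ℕ → Bool) (L : ℕ) : List Bool := List.ofFn fun i : Fin L => x i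

@[simp] lemma cylSeg_length (x : ℕ → Bool) (L : ℕ) : (cylSeg x L).length = L := by
  simp [cylSeg]

lemma mem_cylSeg_iff {y x : ℕ → Bool} {L : ℕ} :
    y ∈ cyl (cylSeg x L) ↔ ∀ i < L, y i = x i := by
  constructor
  · intro h i hi
    have := h ⟨i, by simpa using hi⟩
    simpa [cylSeg, List.get_ofFn] using this
  · intro h i
    have hi : (i : ℕ) < L := by simpa using i.isLt
    rw [h i hi, List.get_eq_getElem]
    simp [cylSeg]

lemma mem_cyl_cylSeg (x : ℕ → Bool) (L : ℕ) : x ∈ cyl (cylSeg x L) :=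
  mem_cylSeg_iff.2 fun _ _ => rfl

lemma cylSeg_anti {x : ℕ → Bool} {L L' : ℕ} (h : L ≤ L') :
    cyl (cylSeg x L') ⊆ cyl (cylSeg x L) := fun y hy =>
  mem_cylSeg_iff.2 fun i hi => mem_cylSeg_iff.1 hy i (lt_of_lt_of_le hi h)

lemma cyl_subset_of_mem_of_le {x : ℕ → Bool} {t : List Bool} (h : x ∈ cyl t) {L : ℕ}
    (hL : t.length ≤ L) : cyl (cylSeg x L) ⊆ cyl t := by
  intro y hy i
  rw [mem_cylSeg_iff] at hy
  rw [hy i (lt_of_lt_of_le i.isLt hL)]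
  exact h i

lemma mem_cylF {x : ℕ → Bool} {c : Finset (List Bool)} :
    x ∈ cylF c ↔ ∃ t ∈ c, x ∈ cyl t := by simp [cylF]

def levelFin (L : ℕ) : Finset (List Bool) := (Finset.univ : Finset (Fin L → Bool)).image List.ofFn

lemma mem_levelFin {t : List Bool} {L : ℕ} : t ∈ levelFin L ↔ t.length = L := by
  simp only [levelFin, Finset.mem_image, Finset.mem_univ, true_and]
  constructor
  · rintro ⟨v, rfl⟩; simp
  · intro h
    subst h
    exact ⟨fun i => t.get i, by simp [List.ofFn_get]⟩

lemma exists_cylSeg_subset {U : Set (ℕ → Bool)} (hU : IsOpen U) {x : ℕ → Bool} (hx : x ∈ U) :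
    ∃ L, cyl (cylSeg x L) ⊆ U := by
  obtain ⟨I, u, h1, h2⟩ := (isOpen_pi_iff.1 hU) x hx
  refine ⟨(I.sup id) + 1, fun y hy => h2 ?_⟩
  intro a ha
  rw [Finset.mem_coe] at ha
  have hya : y a = x a :=
    mem_cylSeg_iff.1 hy a (by have := Finset.le_sup (f := id) ha; simp at this; omega)
  rw [hya]; exact (h1 a ha).2

lemma measurableSet_cyl (s : List Bool) : MeasurableSet (cyl s) := by
  have : cyl s = ⋂ i : Fin s.length, (fun x : ℕ → Bool => x (i : ℕ)) ⁻¹' {s.get i} := by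
    ext x; simp [cyl]
  rw [this]
  exact MeasurableSet.iInter fun i => (measurable_pi_apply _) (measurableSet_singleton _)

lemma measurableSet_cylF (c : Finset (List Bool)) : MeasurableSet (cylF c) :=
  MeasurableSet.biUnion c.countable_toSet fun s _ => measurableSet_cyl s

/-- the prefix of `t` of length `n`, described via `cylSeg`. -/
def preSeg (t : List Bool) (n : ℕ) : List Bool := cylSeg (fun i => t.getD i false) n

lemma preSeg_eq {x : ℕ → Bool} {t : List Bool} (h : x ∈ cyl t) {n : ℕ} (hn : n ≤ t.length) :
    cyl (preSeg t n) = cyl (cylSeg x n) := by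
  have : ∀ i < n, t.getD i false = x i := by
    intro i hi
    have hi' : i < t.length := lt_of_lt_of_le hi hn
    rw [List.getD_eq_getElem _ _ hi']
    have := h ⟨i, hi'⟩
    simp [List.get_eq_getElem] at this
    exact this.symm
  ext y
  rw [preSeg, mem_cylSeg_iff, mem_cylSeg_iff]
  exact ⟨fun hy i hi => (hy i hi).trans (this i hi), fun hy i hi => (hy i hi).trans (this i hi).symm⟩

def TT (U : Set (ℕ → Bool)) (L : ℕ) : Finset (List Bool) :=
  (levelFin L).filter fun t => cyl t ⊆ U

lemma mem_TT {U : Set (ℕ → Bool)} {L : ℕ} {t : List Bool} :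
    t ∈ TT U L ↔ t.length = L ∧ cyl t ⊆ U := by
  simp [TT, mem_levelFin]

def DD (U : Set (ℕ → Bool)) (L L' : ℕ) : Finset (List Bool) :=
  (levelFin L').filter fun t => cyl t ⊆ U ∧ ¬ cyl (preSeg t L) ⊆ U

lemma mem_DD {U : Set (ℕ → Bool)} {L L' : ℕ} {t : List Bool} :
    t ∈ DD U L L' ↔ t.length = L' ∧ cyl t ⊆ U ∧ ¬ cyl (preSeg t L) ⊆ U := by
  simp [DD, mem_levelFin]

lemma cylF_TT_subset {U : Set (ℕ → Bool)} {L : ℕ} : cylF (TT U L) ⊆ U := by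
  intro x hx
  obtain ⟨t, ht, hxt⟩ := mem_cylF.1 hx
  exact (mem_TT.1 ht).2 hxt

lemma coverOne (μ : Measure (ℕ → Bool)) [IsFiniteMeasure μ] [μ.OuterRegular]
    {B : Set (ℕ → Bool)} (hB0 : μ B = 0) (δ : ℕ → ℝ) (hδ : ∀ k, 0 < δ k) :
    ∃ d : ℕ → Finset (List Bool),
      (∀ k, μ (cylF (d k)) < ENNReal.ofReal (δ k)) ∧ B ⊆ ⋃ k, cylF (d k) := by
  obtain ⟨U, hBU, hUo, hUμ⟩ := Set.exists_isOpen_lt_of_lt B (ENNReal.ofReal (δ 0))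
    (by rw [hB0]; exact ENNReal.ofReal_pos.2 (hδ 0))
  have hmono : Monotone fun L => cylF (TT U L) := by
    intro L L' h x hx
    obtain ⟨t, ht, hxt⟩ := mem_cylF.1 hx
    obtain ⟨htl, htU⟩ := mem_TT.1 ht
    exact mem_cylF.2 ⟨cylSeg x L', mem_TT.2 ⟨cylSeg_length _ _,
      (cyl_subset_of_mem_of_le hxt (htl ▸ h)).trans htU⟩, mem_cyl_cylSeg x L'⟩
  have hunion : ⋃ L, cylF (TT U L) = U := by
    apply subset_antisymm
    · exact iUnion_subset fun L => cylF_TT_subset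
    · intro x hx
      obtain ⟨L, hL⟩ := exists_cylSeg_subset hUo hx
      exact mem_iUnion.2 ⟨L, mem_cylF.2 ⟨cylSeg x L, mem_TT.2 ⟨cylSeg_length _ _, hL⟩,
        mem_cyl_cylSeg x L⟩⟩
  have htend : Tendsto (fun L => μ (cylF (TT U L))) atTop (𝓝 (μ U)) := by
    have := tendsto_measure_iUnion_atTop (μ := μ) hmono
    rw [hunion] at this
    exact this
  have hex : ∀ k L0 : ℕ, ∃ L, L0 ≤ L ∧ μ U < μ (cylF (TT U L)) + ENNReal.ofReal (δ k) := by
    intro k L0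
    have h1 : μ U < μ U + ENNReal.ofReal (δ k) :=
      ENNReal.lt_add_right (measure_ne_top μ U) (ENNReal.ofReal_pos.2 (hδ k)).ne'
    have h2 : ∀ᶠ L in atTop, μ U < μ (cylF (TT U L)) + ENNReal.ofReal (δ k) :=
      (htend.add_const _).eventually (eventually_gt_nhds h1)
    exact ((eventually_ge_atTop L0).and h2).exists
  let L : ℕ → ℕ := fun k => Nat.rec (hex 1 0).choose (fun k Lk => (hex (k+2) (Lk+1)).choose) k
  have hL1 : ∀ k, μ U < μ (cylF (TT U (L k))) + ENNReal.ofReal (δ (k+1)) := by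
    intro k
    cases k with
    | zero => exact (hex 1 0).choose_spec.2
    | succ k => exact (hex (k+2) (L k + 1)).choose_spec.2
  have hLlt : ∀ k, L k < L (k+1) := fun k =>
    lt_of_lt_of_le (Nat.lt_succ_self _) (hex (k+2) (L k + 1)).choose_spec.1
  have hLsm : StrictMono L := strictMono_nat_of_lt_succ hLlt
  refine ⟨fun k => Nat.rec (TT U (L 0)) (fun k _ => DD U (L k) (L (k+1))) k, ?_, ?_⟩
  · intro k
    cases k with
    | zero =>
      exact lt_of_le_of_lt (measure_mono cylF_TT_subset) hUμ
    | succ k =>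
      have hsub : cylF (DD U (L k) (L (k+1))) ⊆ cylF (TT U (L (k+1))) \ cylF (TT U (L k)) := by
        intro x hx
        obtain ⟨t, ht, hxt⟩ := mem_cylF.1 hx
        obtain ⟨htl, htU, htP⟩ := mem_DD.1 ht
        constructor
        · exact mem_cylF.2 ⟨t, mem_TT.2 ⟨htl, htU⟩, hxt⟩
        · intro hxk
          obtain ⟨t', ht', hxt'⟩ := mem_cylF.1 hxk
          obtain ⟨ht'l, ht'U⟩ := mem_TT.1 ht'
          apply htP
          rw [preSeg_eq hxt (by rw [htl]; exact (hLlt k).le)]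
          exact (cyl_subset_of_mem_of_le hxt' ht'l.le).trans ht'U
      have hdiff : μ (cylF (TT U (L (k+1))) \ cylF (TT U (L k))) < ENNReal.ofReal (δ (k+1)) := by
        apply measure_diff_lt_of_lt_add (measurableSet_cylF _).nullMeasurableSet
          (hmono (hLlt k).le)
          (measure_ne_top μ _)
        exact lt_of_le_of_lt (measure_mono cylF_TT_subset) (hL1 k)
      exact lt_of_le_of_lt (measure_mono hsub) hdiff
  · intro x hx
    have hxU : x ∈ U := hBU hx
    obtain ⟨L0, hL0⟩ := exists_cylSeg_subset hUo hxU
    have hP : ∃ k, cyl (cylSeg x (L k)) ⊆ U :=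
      ⟨L0, (cylSeg_anti (hLsm.le_apply)).trans hL0⟩
    set k0 := Nat.find hP with hk0
    have hPk0 : cyl (cylSeg x (L k0)) ⊆ U := Nat.find_spec hP
    rcases k0.eq_zero_or_eq_succ_pred with h0 | hs
    · refine mem_iUnion.2 ⟨0, mem_cylF.2 ⟨cylSeg x (L 0), mem_TT.2 ⟨cylSeg_length _ _, ?_⟩,
        mem_cyl_cylSeg x _⟩⟩
      rw [← h0]; exact hPk0
    · set k := k0 - 1 with hk
      have hk0s : k0 = k + 1 := hs
      refine mem_iUnion.2 ⟨k + 1, mem_cylF.2 ⟨cylSeg x (L (k+1)), mem_DD.2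
        ⟨cylSeg_length _ _, ?_, ?_⟩, mem_cyl_cylSeg x _⟩⟩
      · rw [← hk0s]; exact hPk0
      · rw [preSeg_eq (mem_cyl_cylSeg x (L (k+1))) (by rw [cylSeg_length]; exact (hLlt k).le)]
        exact Nat.find_min hP (by omega)

lemma measurableSet_NSet (cbar : ℕ → Finset (List Bool)) : MeasurableSet (NSet cbar) := by
  have : NSet cbar = ⋂ m, ⋃ n, ⋃ (_ : n ≥ m), cylF (cbar n) := by
    ext x; simp [NSet]
  rw [this]
  exact MeasurableSet.iInter fun m => MeasurableSet.iUnion fun n =>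
    MeasurableSet.iUnion fun _ => measurableSet_cylF _

lemma tsum_ofReal_ne_top {ε : ℕ → ℝ} (hpos : ∀ n, 0 < ε n) (hsum : Summable ε) :
    ∑' n, ENNReal.ofReal (ε n) ≠ ⊤ := by
  rw [← ENNReal.ofReal_tsum_of_nonneg (fun n => (hpos n).le) hsum]
  exact ENNReal.ofReal_ne_top

lemma NSet_null (μ : Measure (ℕ → Bool)) {ε : ℕ → ℝ} (hpos : ∀ n, 0 < ε n) (hsum : Summable ε)
    (cbar : ℕ → Finset (List Bool)) (hc : ∀ n, μ (cylF (cbar n)) ≤ ENNReal.ofReal (ε n)) :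
    μ (NSet cbar) = 0 := by
  have key : ∀ m, μ (NSet cbar) ≤ ∑' k, ENNReal.ofReal (ε (k + m)) := by
    intro m
    have hsub : NSet cbar ⊆ ⋃ k, cylF (cbar (k + m)) := by
      intro x hx
      obtain ⟨n, hn, hxn⟩ := hx m
      exact mem_iUnion.2 ⟨n - m, by rwa [Nat.sub_add_cancel hn]⟩
    calc μ (NSet cbar) ≤ μ (⋃ k, cylF (cbar (k + m))) := measure_mono hsub
      _ ≤ ∑' k, μ (cylF (cbar (k + m))) := measure_iUnion_le _
      _ ≤ ∑' k, ENNReal.ofReal (ε (k + m)) := ENNReal.tsum_le_tsum fun k => hc (k + m)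
  have htend := ENNReal.tendsto_sum_nat_add (fun n => ENNReal.ofReal (ε n))
    (tsum_ofReal_ne_top hpos hsum)
  have := ge_of_tendsto' htend key
  simpa using this

lemma NSet_mem_nullIdeal (μ : Measure (ℕ → Bool)) {ε : ℕ → ℝ} (hpos : ∀ n, 0 < ε n)
    (hsum : Summable ε) (cbar : ℕ → Finset (List Bool))
    (hc : ∀ n, μ (cylF (cbar n)) ≤ ENNReal.ofReal (ε n)) : NSet cbar ∈ nullIdealOf μ :=
  ⟨NSet cbar, measurableSet_NSet cbar, subset_rfl, NSet_null μ hpos hsum cbar hc⟩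

lemma pack (μ : Measure (ℕ → Bool)) [IsFiniteMeasure μ] [μ.OuterRegular]
    {ε : ℕ → ℝ} (hpos : ∀ n, 0 < ε n)
    {B : Set (ℕ → Bool)} (hB0 : μ B = 0) :
    ∃ cbar : ℕ → Finset (List Bool),
      (∀ n, μ (cylF (cbar n)) < ENNReal.ofReal (ε n)) ∧ B ⊆ NSet cbar := by
  choose d hd1 hd2 using fun j => coverOne μ hB0 (fun k => ε (Nat.pair j k)) (fun k => hpos _)
  refine ⟨fun n => d (Nat.unpair n).1 (Nat.unpair n).2, ?_, ?_⟩
  · intro n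
    have := hd1 (Nat.unpair n).1 (Nat.unpair n).2
    rwa [Nat.pair_unpair] at this
  · intro x hx m
    obtain ⟨k, hk⟩ := mem_iUnion.1 (hd2 m hx)
    exact ⟨Nat.pair m k, Nat.left_le_pair m k, by simpa [Nat.unpair_pair] using hk⟩

lemma sInf_eq_of_mutual {S T : Set Cardinal.{u}} (hS : S.Nonempty)
    (h1 : ∀ c ∈ S, ∃ c' ∈ T, c' ≤ c) (h2 : ∀ c ∈ T, ∃ c' ∈ S, c' ≤ c) :
    sInf S = sInf T := by
  obtain ⟨c0, hc0⟩ := hS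
  obtain ⟨c1, hc1, -⟩ := h1 c0 hc0
  apply le_antisymm
  · refine le_csInf ⟨c1, hc1⟩ fun c hc => ?_
    obtain ⟨c', hc', hle⟩ := h2 c hc
    exact (csInf_le' hc').trans hle
  · refine le_csInf ⟨c0, hc0⟩ fun c hc => ?_
    obtain ⟨c', hc', hle⟩ := h1 c hc
    exact (csInf_le' hc').trans hle

lemma tukey_b {X : Type u} {Y : Type v} {X' : Type u} {Y' : Type v}
    {r : X → Y → Prop} {r' : X' → Y' → Prop} (h : TukeyLE r r') :
    ∀ c ∈ {c : Cardinal.{u} | ∃ F, RUnbounded r F ∧ c = #F},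
      ∃ c' ∈ {c : Cardinal.{u} | ∃ F, RUnbounded r' F ∧ c = #F}, c' ≤ c := by
  rintro c ⟨F, hF, rfl⟩
  obtain ⟨f, g, hfg⟩ := h
  refine ⟨#(f '' F), ⟨f '' F, ?_, rfl⟩, Cardinal.mk_image_le⟩
  rintro ⟨y', hy'⟩
  exact hF ⟨g y', fun x hx => hfg x y' (hy' (f x) ⟨x, hx, rfl⟩)⟩

lemma tukey_d {X : Type u} {Y : Type v} {X' : Type u} {Y' : Type v}
    {r : X → Y → Prop} {r' : X' → Y' → Prop} (h : TukeyLE r r') :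
    ∀ c ∈ {c : Cardinal.{v} | ∃ E, RDominating r' E ∧ c = #E},
      ∃ c' ∈ {c : Cardinal.{v} | ∃ E, RDominating r E ∧ c = #E}, c' ≤ c := by
  rintro c ⟨E, hE, rfl⟩
  obtain ⟨f, g, hfg⟩ := h
  refine ⟨#(g '' E), ⟨g '' E, ?_, rfl⟩, Cardinal.mk_image_le⟩
  intro x
  obtain ⟨y', hy', hr⟩ := hE (f x)
  exact ⟨g y', ⟨y', hy', rfl⟩, hfg x y' hr⟩

lemma b_CNperp_to_cov (μ : Measure (ℕ → Bool)) :
    ∀ c ∈ {c : Cardinal | ∃ F, RUnbounded (CNperp μ) F ∧ c = #F},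
      ∃ c' ∈ {c : Cardinal | ∃ C ⊆ nullIdealOf μ, ⋃₀ C = Set.univ ∧ c = #C}, c' ≤ c := by
  rintro c ⟨F, hF, rfl⟩
  refine ⟨#(Subtype.val '' F), ⟨Subtype.val '' F, ?_, ?_, rfl⟩, Cardinal.mk_image_le⟩
  · rintro A ⟨a, -, rfl⟩; exact a.2
  · apply eq_univ_of_forall
    intro y
    rw [RUnbounded] at hF
    push_neg at hF
    obtain ⟨A, hAF, hyA⟩ := hF y
    exact ⟨A, ⟨A, hAF, rfl⟩, not_not.1 hyA⟩

lemma cov_to_b_CNperp (μ : Measure (ℕ → Bool)) :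
    ∀ c ∈ {c : Cardinal | ∃ C ⊆ nullIdealOf μ, ⋃₀ C = Set.univ ∧ c = #C},
      ∃ c' ∈ {c : Cardinal | ∃ F, RUnbounded (CNperp μ) F ∧ c = #F}, c' ≤ c := by
  rintro c ⟨C, hCI, hCu, rfl⟩
  refine ⟨#{A : nullIdealOf μ | (A : Set (ℕ → Bool)) ∈ C}, ⟨_, ?_, rfl⟩, ?_⟩
  · rintro ⟨y, hy⟩
    have hyC : y ∈ ⋃₀ C := hCu ▸ mem_univ y
    obtain ⟨A, hAC, hyA⟩ := hyC
    exact hy ⟨A, hCI hAC⟩ hAC hyA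
  · refine Cardinal.mk_le_of_injective (f := fun a => (⟨a.1.1, a.2⟩ : C)) ?_
    intro a b hab
    have : a.1.1 = b.1.1 := by simpa using hab
    exact Subtype.ext (Subtype.ext this)

lemma dom_CNperp_iff (μ : Measure (ℕ → Bool)) (E : Set (ℕ → Bool)) :
    RDominating (CNperp μ) E ↔ E ∉ nullIdealOf μ := by
  constructor
  · intro hE hEI
    obtain ⟨y, hyE, hy⟩ := hE ⟨E, hEI⟩
    exact hy hyE
  · intro hE A
    by_contra h
    push_neg at h
    obtain ⟨Bm, hm, hsub, h0⟩ := A.2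
    refine hE ⟨Bm, hm, fun y hy => hsub ?_, h0⟩
    have := h y hy
    rw [CNperp, not_not] at this
    exact this

lemma dNum_CNperp (μ : Measure (ℕ → Bool)) :
    dNum (CNperp μ) = nonIdeal (nullIdealOf μ) := by
  unfold dNum nonIdeal
  congr 1
  ext c
  simp only [mem_setOf_eq, dom_CNperp_iff]

-- new helpers
lemma cyl_nil : cyl ([] : List Bool) = Set.univ :=
  eq_univ_of_forall fun x i => i.elim0

lemma measure_univ_eq_one (μ : Measure (ℕ → Bool))
    (hμ : ∀ s : List Bool, μ (cyl s) = (1 / 2 : ENNReal) ^ s.length) :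
    μ Set.univ = 1 := by
  rw [← cyl_nil, hμ]
  simp

lemma half_pow_lt {r : ℝ} (hr : 0 < r) {K : ℕ} (hK : ((1:ℝ)/2) ^ K < r) :
    (1 / 2 : ENNReal) ^ K < ENNReal.ofReal r := by
  have h2 : (1 / 2 : ENNReal) = ENNReal.ofReal (1 / 2) := by
    rw [ENNReal.ofReal_div_of_pos (by norm_num), ENNReal.ofReal_one, ENNReal.ofReal_ofNat]
  rw [h2, ← ENNReal.ofReal_pow (by norm_num)]
  exact (ENNReal.ofReal_lt_ofReal_iff hr).2 hK

lemma singleton_mem_nullIdeal (μ : Measure (ℕ → Bool))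
    (hμ : ∀ s : List Bool, μ (cyl s) = (1 / 2 : ENNReal) ^ s.length) (y : ℕ → Bool) :
    {y} ∈ nullIdealOf μ := by
  refine ⟨⋂ L, cyl (cylSeg y L), MeasurableSet.iInter fun L => measurableSet_cyl _, ?_, ?_⟩
  · intro z hz
    rw [mem_singleton_iff] at hz
    subst hz
    exact mem_iInter.2 fun L => mem_cyl_cylSeg z L
  · have hb : ∀ L, μ (⋂ L, cyl (cylSeg y L)) ≤ (1 / 2 : ENNReal) ^ L := by
      intro L
      calc μ (⋂ L, cyl (cylSeg y L)) ≤ μ (cyl (cylSeg y L)) := measure_mono (iInter_subset _ L)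
        _ = (1 / 2 : ENNReal) ^ L := by rw [hμ, cylSeg_length]
    have htend : Tendsto (fun L : ℕ => (1 / 2 : ENNReal) ^ L) atTop (𝓝 0) :=
      ENNReal.tendsto_pow_atTop_nhds_zero_of_lt_one (by norm_num)
    exact le_antisymm (ge_of_tendsto' htend hb) zero_le

lemma exists_code_mem (μ : Measure (ℕ → Bool))
    (hμ : ∀ s : List Bool, μ (cyl s) = (1 / 2 : ENNReal) ^ s.length)
    {ε : ℕ → ℝ} (hpos : ∀ n, 0 < ε n) (y : ℕ → Bool) :
    ∃ cbar : ℕ → Finset (List Bool),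
      (∀ n, μ (cylF (cbar n)) < ENNReal.ofReal (ε n)) ∧ y ∈ NSet cbar := by
  have hhalf : ∀ n, ∃ K, ((1:ℝ)/2) ^ K < ε n := fun n =>
    exists_pow_lt_of_lt_one (hpos n) (by norm_num)
  choose K hK using hhalf
  refine ⟨fun n => {cylSeg y (K n)}, ?_, ?_⟩
  · intro n
    have hc : cylF {cylSeg y (K n)} = cyl (cylSeg y (K n)) := by simp [cylF]
    rw [hc, hμ, cylSeg_length]
    exact half_pow_lt (hpos n) (hK n)
  · intro m
    refine ⟨m, le_rfl, ?_⟩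
    have hc : cylF {cylSeg y (K m)} = cyl (cylSeg y (K m)) := by simp [cylF]
    rw [hc]
    exact mem_cyl_cylSeg y (K m)

lemma exists_not_mem_null (μ : Measure (ℕ → Bool)) (h1 : μ Set.univ = 1)
    {A : Set (ℕ → Bool)} (hA : A ∈ nullIdealOf μ) : ∃ y, y ∉ A := by
  obtain ⟨Bm, hm, hsub, h0⟩ := hA
  by_contra h
  push_neg at h
  have : (Set.univ : Set (ℕ → Bool)) ⊆ Bm := fun y _ => hsub (h y)
  have := (measure_mono this).trans_eq h0
  rw [h1] at this
  simp at this


/-- With `μ = Lb₂` (characterized by `μ [s] = 2^{-|s|}`) and positive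
summable `ε̄`: `Cn ≅_T C_{N(2^ω)}^⊥`, and in particular `𝔟(Cn) = cov(N(2^ω))` and
`𝔡(Cn) = non(N(2^ω))`. -/
theorem stmt7 (ε : ℕ → ℝ) (hpos : ∀ n, 0 < ε n) (hsum : Summable ε)
    (μ : MeasureTheory.Measure (ℕ → Bool))
    (hμ : ∀ s : List Bool, μ (cyl s) = (1 / 2 : ENNReal) ^ s.length) :
    TukeyLE (CnRel μ ε) (CNperp μ) ∧ TukeyLE (CNperp μ) (CnRel μ ε) ∧
    bNum (CnRel μ ε) = covIdeal (nullIdealOf μ) ∧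
    dNum (CnRel μ ε) = nonIdeal (nullIdealOf μ) := by
  have h1 : μ Set.univ = 1 := measure_univ_eq_one μ hμ
  haveI : IsFiniteMeasure μ := ⟨by rw [h1]; exact ENNReal.one_lt_top⟩
  haveI : μ.OuterRegular := inferInstance
  -- Tukey part 1
  have part1 : TukeyLE (CnRel μ ε) (CNperp μ) :=
    ⟨fun c => ⟨NSet c.1, NSet_mem_nullIdeal μ hpos hsum c.1 fun n => (c.2 n).le⟩, id,
      fun c y h => h⟩
  -- Tukey part 2
  have hpk : ∀ A : nullIdealOf μ, ∃ c : OmT μ ε, (A : Set (ℕ → Bool)) ⊆ NSet c.1 := by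
    rintro ⟨A, hA⟩
    obtain ⟨Bm, hm, hsub, h0⟩ := hA
    obtain ⟨cbar, hc1, hc2⟩ := pack μ hpos h0
    exact ⟨⟨cbar, hc1⟩, hsub.trans hc2⟩
  choose fP hfP using hpk
  have part2 : TukeyLE (CNperp μ) (CnRel μ ε) :=
    ⟨fP, id, fun A y h hy => h (hfP A hy)⟩
  refine ⟨part1, part2, ?_, ?_⟩
  -- nonemptiness witnesses
  · have hUnbCn : RUnbounded (CnRel μ ε) Set.univ := by
      rintro ⟨y, hy⟩
      obtain ⟨cbar, hc1, hc2⟩ := exists_code_mem μ hμ hpos y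
      exact hy ⟨cbar, hc1⟩ (mem_univ _) hc2
    have e1 : bNum (CnRel μ ε) = bNum (CNperp μ) :=
      sInf_eq_of_mutual ⟨_, ⟨Set.univ, hUnbCn, rfl⟩⟩ (tukey_b part1) (tukey_b part2)
    have hUnbPerp : RUnbounded (CNperp μ) Set.univ := by
      rintro ⟨y, hy⟩
      exact hy ⟨{y}, singleton_mem_nullIdeal μ hμ y⟩ (mem_univ _) rfl
    have e2 : bNum (CNperp μ) = covIdeal (nullIdealOf μ) :=
      sInf_eq_of_mutual ⟨_, ⟨Set.univ, hUnbPerp, rfl⟩⟩ (b_CNperp_to_cov μ) (cov_to_b_CNperp μ)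
    exact e1.trans e2
  · have hDomCn : RDominating (CnRel μ ε) Set.univ := by
      intro c
      have h0 := NSet_mem_nullIdeal μ hpos hsum c.1 fun n => (c.2 n).le
      obtain ⟨y, hy⟩ := exists_not_mem_null μ h1 h0
      exact ⟨y, mem_univ _, hy⟩
    have e1 : dNum (CnRel μ ε) = dNum (CNperp μ) :=
      sInf_eq_of_mutual ⟨_, ⟨Set.univ, hDomCn, rfl⟩⟩ (tukey_d part2) (tukey_d part1)
    exact e1.trans (dNum_CNperp μ)

end
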